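/- Let K be a field of characteristic 0 and L a Lie algebra over K. Let e, h, f ∈ L be an sl2-triple (⁅h,e⁆ = 2e, ⁅h,f⁆ = -2f, ⁅e,f⁆ = h) such that ad(e) and ad(f) are nilpotent endomorphisms of L. Let τ : L → L be a Lie algebra automorphism with τ(e) = -f and τ(f) = -e. Then τ commutes with θ := exp(ad e) ∘ exp(ad(-f)) ∘ exp(ad e), i.e., τ ∘ θ = θ ∘ τ. -/

import Mathlib

open Finset in
/-- The exponential of a nilpotent endomorphism, computed as the (finite) sum
`Σ_{k < m} N^k / k!`; when `N ^ m = 0` this is the full exponential series. -/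
noncomputable def expNil {K V : Type*} [Field K] [AddCommGroup V] [Module K V]
    (m : ℕ) (N : Module.End K V) : Module.End K V :=
  ∑ k ∈ range m, ((k.factorial : K)⁻¹) • N ^ k

section ExpNil

variable {K V : Type*} [Field K] [AddCommGroup V] [Module K V]

lemma expNil_congr {m M : ℕ} {N : Module.End K V} (hN : N ^ m = 0) (hmM : m ≤ M) :
    expNil M N = expNil m N := by
  refine (Finset.sum_subset (Finset.range_subset_range.mpr hmM) ?_).symm
  intro k _ hk
  have hmk : m ≤ k := by by_contra hlt; exact hk (Finset.mem_range.mpr (lt_of_not_ge hlt))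
  have : N ^ k = 0 := pow_eq_zero_of_le hmk hN
  simp [this]

lemma expNil_zero {M : ℕ} (hM : 0 < M) : expNil M (0 : Module.End K V) = 1 := by
  unfold expNil
  rw [Finset.sum_eq_single 0]
  · simp
  · intro k _ hk; simp [zero_pow hk]
  · intro habs; exact absurd (Finset.mem_range.mpr hM) habs

lemma neg_pow_eq_zero {M : ℕ} {P : Module.End K V} (hP : P ^ M = 0) : (-P) ^ M = 0 := by
  rw [neg_pow, hP, mul_zero]

open LinearMap in
lemma expNil_mulLeft (M : ℕ) (P Q : Module.End K V) :
    expNil M (mulLeft K P) Q = expNil M P * Q := by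
  unfold expNil
  rw [LinearMap.sum_apply, Finset.sum_mul]
  refine Finset.sum_congr rfl fun k _ => ?_
  rw [LinearMap.smul_apply, pow_mulLeft, mulLeft_apply, smul_mul_assoc]

open LinearMap in
lemma expNil_mulRight (M : ℕ) (P Q : Module.End K V) :
    expNil M (mulRight K P) Q = Q * expNil M P := by
  unfold expNil
  rw [LinearMap.sum_apply, Finset.mul_sum]
  refine Finset.sum_congr rfl fun k _ => ?_
  rw [LinearMap.smul_apply, pow_mulRight, mulRight_apply, mul_smul_comm]

/-- Conjugation of an exponential by mutually inverse elements. -/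
lemma conj_expNil {M : ℕ} {u v Q : Module.End K V} (huv : u * v = 1) (hvu : v * u = 1) :
    v * expNil M Q * u = expNil M (v * Q * u) := by
  have hpow : ∀ k : ℕ, v * Q ^ k * u = (v * Q * u) ^ k := by
    intro k
    induction k with
    | zero => simpa using hvu
    | succ k ih =>
      rw [pow_succ, pow_succ, ← ih,
        show v * Q ^ k * u * (v * Q * u) = v * Q ^ k * (u * v) * (Q * u) from by noncomm_ring,
        huv, mul_one]
      noncomm_ring
  unfold expNil
  rw [Finset.mul_sum, Finset.sum_mul]
  refine Finset.sum_congr rfl fun k _ => ?_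
  rw [mul_smul_comm, smul_mul_assoc, hpow]

variable [CharZero K]

open Finset in
/-- Exponential of a sum of commuting nilpotent endomorphisms. -/
lemma expNil_add {M : ℕ} {P Q : Module.End K V} (hc : Commute P Q)
    (hP : P ^ M = 0) (hQ : Q ^ M = 0) :
    expNil M P * expNil M Q = expNil (2 * M) (P + Q) := by
  set c : ℕ × ℕ → Module.End K V := fun p =>
    (((p.1.factorial : K))⁻¹ * ((p.2.factorial : K))⁻¹) • (P ^ p.1 * Q ^ p.2) with hcdef
  have key : ∀ p : ℕ × ℕ, M ≤ p.1 ∨ M ≤ p.2 → c p = 0 := by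
    rintro ⟨i, j⟩ (hi | hj)
    · simp only [hcdef, pow_eq_zero_of_le hi hP, zero_mul, smul_zero]
    · simp only [hcdef, pow_eq_zero_of_le hj hQ, mul_zero, smul_zero]
  have hL : expNil M P * expNil M Q = ∑ p ∈ range M ×ˢ range M, c p := by
    rw [Finset.sum_product]
    unfold expNil
    rw [Finset.sum_mul_sum]
    refine Finset.sum_congr rfl fun i _ => Finset.sum_congr rfl fun j _ => ?_
    simp only [hcdef, smul_mul_assoc, mul_smul_comm, smul_smul]
    rw [mul_comm]
  have hsub1 : (range M ×ˢ range M : Finset (ℕ × ℕ)) ⊆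
      (range (2 * M) ×ˢ range (2 * M)).filter (fun p => p.1 + p.2 < 2 * M) := by
    rintro ⟨i, j⟩ hij
    simp only [Finset.mem_product, Finset.mem_range, Finset.mem_filter] at hij ⊢
    omega
  have hL2 : expNil M P * expNil M Q
      = ∑ p ∈ (range (2 * M) ×ˢ range (2 * M)).filter (fun p => p.1 + p.2 < 2 * M), c p := by
    rw [hL]
    refine Finset.sum_subset hsub1 fun p hp hnp => key p ?_
    simp only [Finset.mem_product, Finset.mem_range, Finset.mem_filter] at hp hnp
    omega
  rw [hL2]
  unfold expNil
  have hR : ∀ n ∈ range (2 * M), ((n.factorial : K))⁻¹ • (P + Q) ^ n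
      = ∑ i ∈ range (n + 1), c (i, n - i) := by
    intro n _
    rw [hc.add_pow, Finset.smul_sum]
    refine Finset.sum_congr rfl fun i hi => ?_
    have hin : i ≤ n := Nat.lt_succ_iff.mp (Finset.mem_range.mp hi)
    have : P ^ i * Q ^ (n - i) * (n.choose i : Module.End K V)
        = ((n.choose i : K)) • (P ^ i * Q ^ (n - i)) := by
      rw [(Nat.cast_commute (n.choose i) (P ^ i * Q ^ (n - i))).symm.eq, ← nsmul_eq_mul,
        Nat.cast_smul_eq_nsmul]
    rw [this, smul_smul, hcdef]
    congr 1
    have h0 : (i.factorial : K) ≠ 0 := Nat.cast_ne_zero.mpr i.factorial_ne_zero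
    have h1 : ((n - i).factorial : K) ≠ 0 := Nat.cast_ne_zero.mpr (n - i).factorial_ne_zero
    have h2 : (n.factorial : K) ≠ 0 := Nat.cast_ne_zero.mpr n.factorial_ne_zero
    have hch : ((n.choose i : ℕ) : K) * (i.factorial : K) * ((n - i).factorial : K)
        = (n.factorial : K) := by
      rw [← Nat.cast_mul, ← Nat.cast_mul]
      exact_mod_cast congrArg (Nat.cast (R := K)) (Nat.choose_mul_factorial_mul_factorial hin)
    field_simp
    linear_combination hch
  rw [Finset.sum_congr rfl hR, Finset.sum_sigma']
  refine Finset.sum_nbij' (fun q => (⟨q.1 + q.2, q.1⟩ : Σ _ : ℕ, ℕ)) (fun p => (p.2, p.1 - p.2))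
    ?_ ?_ ?_ ?_ ?_
  · rintro ⟨i, j⟩ hq
    simp only [Finset.mem_filter, Finset.mem_product, Finset.mem_range] at hq
    simp only [Finset.mem_sigma, Finset.mem_range, Nat.lt_succ_iff]
    omega
  · rintro ⟨n, i⟩ hp
    simp only [Finset.mem_sigma, Finset.mem_range, Nat.lt_succ_iff] at hp
    simp only [Finset.mem_filter, Finset.mem_product, Finset.mem_range]
    omega
  · rintro ⟨i, j⟩ hq
    simp [Nat.add_sub_cancel_left]
  · rintro ⟨n, i⟩ hp
    simp only [Finset.mem_sigma, Finset.mem_range, Nat.lt_succ_iff] at hp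
    have hni : i + (n - i) = n := by omega
    simp [hni]
  · rintro ⟨i, j⟩ hq
    simp [Nat.add_sub_cancel_left]

lemma expNil_mul_expNil_neg {M : ℕ} {P : Module.End K V} (hP : P ^ M = 0) (hM : 0 < M) :
    expNil M P * expNil M (-P) = 1 := by
  rw [expNil_add (Commute.neg_right (Commute.refl P)) hP (neg_pow_eq_zero hP),
    add_neg_cancel, expNil_zero (by omega)]

open LinearMap in
/-- Conjugation by the exponential is the exponential of `ad`. -/
lemma expNil_conj {M : ℕ} {P : Module.End K V} (hP : P ^ M = 0) (Q : Module.End K V) :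
    expNil M P * Q * expNil M (-P) = expNil (2 * M) (mulLeft K P - mulRight K P) Q := by
  have h1 : mulLeft K P - mulRight K P = mulLeft K P + mulRight K (-P) := by
    ext R
    simp [sub_eq_add_neg]
  have hcl : (mulLeft K P) ^ M = 0 := by rw [pow_mulLeft, hP]; ext R; simp
  have hcr : (mulRight K (-P)) ^ M = 0 := by
    rw [pow_mulRight, neg_pow_eq_zero hP]; ext R; simp
  rw [h1, ← expNil_add (commute_mulLeft_right P (-P)) hcl hcr, Module.End.mul_apply,
    expNil_mulRight, expNil_mulLeft, mul_assoc]

/-- Evaluation of the exponential series when the operator kills the third iterate. -/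
lemma expNil_apply_of_three {N : ℕ} (hN : 3 ≤ N) (T : Module.End K V) (Q R S : V)
    (h1 : T Q = R) (h2 : T R = S) (h3 : T S = 0) :
    expNil N T Q = Q + R + (2 : K)⁻¹ • S := by
  unfold expNil
  rw [LinearMap.sum_apply]
  have hzero : ∀ k ∈ Finset.range N, k ∉ Finset.range 3 →
      ((k.factorial : K)⁻¹ • T ^ k) Q = 0 := by
    intro k _ hk3
    have h3k : 3 ≤ k := by
      by_contra hlt; exact hk3 (Finset.mem_range.mpr (lt_of_not_ge hlt))
    have hT3 : T ^ k = T ^ (k - 3) * T ^ 3 := by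
      rw [← pow_add]; congr 1; omega
    have hq3 : (T ^ 3) Q = 0 := by
      rw [show (3 : ℕ) = 2 + 1 from rfl, pow_succ, sq, Module.End.mul_apply,
        Module.End.mul_apply, h1, h2, h3]
    have : (T ^ k) Q = 0 := by
      rw [hT3, Module.End.mul_apply, hq3, map_zero]
    simp [LinearMap.smul_apply, this]
  rw [← Finset.sum_subset (Finset.range_subset_range.mpr hN) hzero]
  rw [Finset.sum_range_succ, Finset.sum_range_succ, Finset.sum_range_one]
  simp only [LinearMap.smul_apply, pow_zero, pow_one, Module.End.one_apply]
  rw [show T ^ 2 = T * T from sq T, Module.End.mul_apply, h1, h2]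
  norm_num [Nat.factorial]

open LinearMap in
/-- The braid relation for exponentials of an `sl2`-pair of nilpotent endomorphisms. -/
lemma expNil_braid {M : ℕ} (hM3 : 3 ≤ M) {X Z H : Module.End K V}
    (hX : X ^ M = 0) (hZ : Z ^ M = 0)
    (hXZ : X * Z - Z * X = H)
    (hHX : H * X - X * H = (2 : K) • X)
    (hHZ : H * Z - Z * H = (-2 : K) • Z) :
    expNil M X * expNil M (-Z) * expNil M X
      = expNil M (-Z) * expNil M X * expNil M (-Z) := by
  have hM0 : 0 < M := by omega
  have hnX : (-X) ^ M = 0 := neg_pow_eq_zero hX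
  have hnZ : (-Z) ^ M = 0 := neg_pow_eq_zero hZ
  set A := expNil M X with hA
  set A' := expNil M (-X) with hA'
  set B := expNil M (-Z) with hB
  set B' := expNil M Z with hB'
  have hAA' : A * A' = 1 := expNil_mul_expNil_neg hX hM0
  have hA'A : A' * A = 1 := by
    have := expNil_mul_expNil_neg hnX hM0
    rwa [neg_neg] at this
  have hBB' : B * B' = 1 := by
    have := expNil_mul_expNil_neg hnZ hM0
    rwa [neg_neg] at this
  have hB'B : B' * B = 1 := expNil_mul_expNil_neg hZ hM0
  have htwo : (2 : K) ≠ 0 := two_ne_zero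
  -- first conjugation
  have hc1 : A' * (-Z) * A = -Z + H + X := by
    have hconj := expNil_conj hnX (-Z)
    rw [neg_neg] at hconj
    rw [hA', hA, hconj]
    have e1 : (mulLeft K (-X) - mulRight K (-X)) (-Z) = H := by
      simp only [LinearMap.sub_apply, mulLeft_apply, mulRight_apply, neg_mul_neg]
      exact hXZ
    have e2 : (mulLeft K (-X) - mulRight K (-X)) H = (2 : K) • X := by
      simp only [LinearMap.sub_apply, mulLeft_apply, mulRight_apply, neg_mul, mul_neg,
        sub_neg_eq_add, neg_add_eq_sub]
      exact hHX
    have e3 : (mulLeft K (-X) - mulRight K (-X)) ((2 : K) • X) = 0 := by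
      simp only [LinearMap.sub_apply, mulLeft_apply, mulRight_apply, neg_mul, mul_neg,
        mul_smul_comm, smul_mul_assoc, sub_neg_eq_add]
      rw [smul_neg, neg_add_cancel]
    rw [expNil_apply_of_three (by omega) _ _ _ _ e1 e2 e3, smul_smul,
      inv_mul_cancel₀ htwo, one_smul]
  -- second conjugation
  have hc2 : B * X * B' = -Z + H + X := by
    have hconj := expNil_conj hnZ X
    rw [neg_neg] at hconj
    rw [hB, hB', hconj]
    have e1 : (mulLeft K (-Z) - mulRight K (-Z)) X = H := by
      simp only [LinearMap.sub_apply, mulLeft_apply, mulRight_apply, neg_mul, mul_neg,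
        sub_neg_eq_add, neg_add_eq_sub]
      exact hXZ
    have e2 : (mulLeft K (-Z) - mulRight K (-Z)) H = (-2 : K) • Z := by
      simp only [LinearMap.sub_apply, mulLeft_apply, mulRight_apply, neg_mul, mul_neg,
        sub_neg_eq_add, neg_add_eq_sub]
      exact hHZ
    have e3 : (mulLeft K (-Z) - mulRight K (-Z)) ((-2 : K) • Z) = 0 := by
      simp only [LinearMap.sub_apply, mulLeft_apply, mulRight_apply, neg_mul, mul_neg,
        mul_smul_comm, smul_mul_assoc, sub_neg_eq_add]
      rw [smul_neg, neg_add_cancel]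
    rw [expNil_apply_of_three (by omega) _ _ _ _ e1 e2 e3, smul_smul]
    have : (2 : K)⁻¹ * (-2 : K) = -1 := by
      field_simp
    rw [this, neg_one_smul]
    abel
  -- the two conjugated exponentials agree
  have claim1 : A' * B * A = expNil M (-Z + H + X) := by
    rw [hB, conj_expNil hAA' hA'A, hc1]
  have claim2 : B * A * B' = expNil M (-Z + H + X) := by
    rw [hA, conj_expNil hB'B hBB', hc2]
  have l : A * (A' * B * A) * B = B * A * B := by
    rw [show A * (A' * B * A) * B = (A * A') * (B * (A * B)) from by noncomm_ring, hAA',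
      one_mul]
    noncomm_ring
  have r : A * (B * A * B') * B = A * B * A := by
    rw [show A * (B * A * B') * B = (A * (B * A)) * (B' * B) from by noncomm_ring, hB'B,
      mul_one, mul_assoc]
  rw [← r, claim2, ← claim1, l]

end ExpNil

section Tau

variable {K L : Type*} [Field K] [LieRing L] [LieAlgebra K L]

lemma tau_expNil (τ : L ≃ₗ⁅K⁆ L) {N N' : Module.End K L}
    (hNN' : ∀ w, τ (N w) = N' (τ w)) (M : ℕ) (x : L) :
    τ (expNil M N x) = expNil M N' (τ x) := by
  have hpow : ∀ k : ℕ, ∀ w : L, τ ((N ^ k) w) = (N' ^ k) (τ w) := by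
    intro k
    induction k with
    | zero => intro w; simp
    | succ k ih =>
      intro w
      rw [pow_succ, pow_succ, Module.End.mul_apply, Module.End.mul_apply, ih, hNN']
  unfold expNil
  rw [LinearMap.sum_apply, LinearMap.sum_apply]
  calc τ (∑ k ∈ Finset.range M, ((k.factorial : K)⁻¹ • N ^ k) x)
      = ∑ k ∈ Finset.range M, (k.factorial : K)⁻¹ • (N' ^ k) (τ x) := by
        rw [show (τ : L → L) = (τ.toLinearEquiv : L → L) from rfl, map_sum]
        refine Finset.sum_congr rfl fun k _ => ?_
        rw [LinearMap.smul_apply, map_smul]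
        congr 1
        exact hpow k x
    _ = ∑ k ∈ Finset.range M, ((k.factorial : K)⁻¹ • N' ^ k) (τ x) := by
        refine Finset.sum_congr rfl fun k _ => ?_
        rw [LinearMap.smul_apply]

end Tau

open LieAlgebra in
/-- A Lie algebra automorphism `τ` with `τ e = -f` and `τ f = -e` commutes with
`θ = exp(ad e) ∘ exp(ad (-f)) ∘ exp(ad e)` for an `sl2`-triple `(e, h, f)` with
`ad e` and `ad f` nilpotent. -/
theorem stmt4 {K L : Type*} [Field K] [CharZero K] [LieRing L] [LieAlgebra K L]
    (e h f : L)
    (h1 : ⁅h, e⁆ = (2 : K) • e) (h2 : ⁅h, f⁆ = (-2 : K) • f) (h3 : ⁅e, f⁆ = h)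
    (m : ℕ) (hme : (LieAlgebra.ad K L e) ^ m = 0) (hmf : (LieAlgebra.ad K L f) ^ m = 0)
    (τ : L ≃ₗ⁅K⁆ L) (hτe : τ e = -f) (hτf : τ f = -e) :
    ∀ x : L,
      τ ((expNil m (LieAlgebra.ad K L e) ∘ₗ expNil m (LieAlgebra.ad K L (-f))
          ∘ₗ expNil m (LieAlgebra.ad K L e)) x)
        = (expNil m (LieAlgebra.ad K L e) ∘ₗ expNil m (LieAlgebra.ad K L (-f))
          ∘ₗ expNil m (LieAlgebra.ad K L e)) (τ x) := by
  intro x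
  letI : LieRing (Module.End K L) := LieRing.ofAssociativeRing
  set M := m + 3 with hMdef
  have hmM : m ≤ M := by omega
  set X := ad K L e with hXdef
  set Z := ad K L f with hZdef
  set Hop := ad K L h with hHdef
  have hX : X ^ M = 0 := pow_eq_zero_of_le hmM hme
  have hZM : Z ^ M = 0 := pow_eq_zero_of_le hmM hmf
  have hXZ : X * Z - Z * X = Hop := by
    rw [← Ring.lie_def, hXdef, hZdef, ← LieHom.map_lie (ad K L) e f, h3, hHdef]
  have hHX : Hop * X - X * Hop = (2 : K) • X := by
    rw [← Ring.lie_def, hXdef, hHdef, ← LieHom.map_lie (ad K L) h e, h1, map_smul]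
  have hHZ : Hop * Z - Z * Hop = (-2 : K) • Z := by
    rw [← Ring.lie_def, hZdef, hHdef, ← LieHom.map_lie (ad K L) h f, h2, map_smul]
  have hadnf : ad K L (-f) = -Z := by rw [hZdef, map_neg]
  have hnZm : (-Z) ^ m = 0 := neg_pow_eq_zero hmf
  have hexp1 : expNil m X = expNil M X := (expNil_congr hme hmM).symm
  have hexp2 : expNil m (-Z) = expNil M (-Z) := (expNil_congr hnZm hmM).symm
  have hbraid := expNil_braid (K := K) (V := L) (by omega : 3 ≤ M) hX hZM hXZ hHX hHZ
  have hNN'1 : ∀ w, τ (X w) = (-Z) (τ w) := by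
    intro w
    rw [hXdef, ad_apply, LinearMap.neg_apply, hZdef, ad_apply,
      show τ ⁅e, w⁆ = ⁅τ e, τ w⁆ from τ.toLieHom.map_lie e w, hτe, neg_lie]
  have hNN'2 : ∀ w, τ ((-Z) w) = X (τ w) := by
    intro w
    rw [LinearMap.neg_apply, hZdef, ad_apply, hXdef, ad_apply,
      show τ (-⁅f, w⁆) = -τ ⁅f, w⁆ from τ.toLieHom.map_neg ⁅f, w⁆,
      show τ ⁅f, w⁆ = ⁅τ f, τ w⁆ from τ.toLieHom.map_lie f w, hτf, neg_lie, neg_neg]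
  simp only [LinearMap.comp_apply, hadnf, hexp1, hexp2]
  rw [tau_expNil τ hNN'1 M, tau_expNil τ hNN'2 M, tau_expNil τ hNN'1 M]
  show (expNil M (-Z) * expNil M X * expNil M (-Z)) (τ x)
      = (expNil M X * expNil M (-Z) * expNil M X) (τ x)
  rw [← hbraid]
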